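/- The power mean F(κ) = (n⁻¹ Σᵢ κᵢʳ)^{1/r}, for -1 ≤ r < 1 and r ≠ 0, is strictly concave in non-radial directions on Γ₊: for every κ ∈ Γ₊ and every nonzero ξ ∈ ℝⁿ not proportional to κ, one has Σᵢⱼ Fᵢⱼ(κ) ξᵢ ξⱼ < 0. -/

import Mathlib

open Real Finset

lemma aux_sum_rpow (n : ℕ) (r : ℝ) (x : Fin n → ℝ) (hx : ∀ i, 0 < x i) :
    HasFDerivAt (fun y : Fin n → ℝ => ∑ i, y i ^ r)
      (∑ i, (r * x i ^ (r-1)) • (ContinuousLinearMap.proj i : (Fin n → ℝ) →L[ℝ] ℝ)) x := by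
  apply HasFDerivAt.fun_sum
  intro i _
  have h1 : HasFDerivAt (fun y : Fin n → ℝ => y i)
      (ContinuousLinearMap.proj i : (Fin n → ℝ) →L[ℝ] ℝ) x :=
    (ContinuousLinearMap.proj i : (Fin n → ℝ) →L[ℝ] ℝ).hasFDerivAt
  exact (Real.hasDerivAt_rpow_const (Or.inl (hx i).ne')).comp_hasFDerivAt x h1

lemma aux_main (n : ℕ) (hn : 1 ≤ n) (r q : ℝ) (x : Fin n → ℝ) (hx : ∀ i, 0 < x i) :
    HasFDerivAt (fun y : Fin n → ℝ => ((n : ℝ)⁻¹ * ∑ i, y i ^ r) ^ q)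
      ((q * ((n : ℝ)⁻¹ * ∑ i, x i ^ r) ^ (q - 1)) •
        ((n : ℝ)⁻¹ • ∑ i, (r * x i ^ (r-1)) • (ContinuousLinearMap.proj i : (Fin n → ℝ) →L[ℝ] ℝ))) x := by
  have hSpos : 0 < ∑ i, x i ^ r := by
    apply Finset.sum_pos (fun i _ => Real.rpow_pos_of_pos (hx i) r)
    simpa [Finset.univ_nonempty_iff] using Fin.pos_iff_nonempty.mp hn
  have hg : HasFDerivAt (fun y : Fin n → ℝ => (n : ℝ)⁻¹ * ∑ i, y i ^ r)
      ((n : ℝ)⁻¹ • ∑ i, (r * x i ^ (r-1)) • (ContinuousLinearMap.proj i : (Fin n → ℝ) →L[ℝ] ℝ)) x :=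
    (aux_sum_rpow n r x hx).const_mul _
  have hnpos : (0:ℝ) < (n:ℝ) := by exact_mod_cast hn
  have hφ : HasDerivAt (fun t : ℝ => t ^ q) (q * ((n : ℝ)⁻¹ * ∑ i, x i ^ r) ^ (q-1))
      ((n : ℝ)⁻¹ * ∑ i, x i ^ r) :=
    Real.hasDerivAt_rpow_const (Or.inl (by positivity))
  exact hφ.comp_hasFDerivAt x hg

lemma aux_fderiv_val (n : ℕ) (hn : 1 ≤ n) (r : ℝ) (x : Fin n → ℝ) (hx : ∀ i, 0 < x i)
    (j : Fin n) :
    fderiv ℝ (fun y : Fin n → ℝ => ((n:ℝ)⁻¹ * ∑ i, y i ^ r) ^ (1/r)) x (Pi.single j 1)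
      = (1/r) * (((n:ℝ)⁻¹ * ∑ i, x i ^ r) ^ (1/r - 1) * ((n:ℝ)⁻¹ * (r * x j ^ (r-1)))) := by
  rw [(aux_main n hn r (1/r) x hx).fderiv]
  simp [ContinuousLinearMap.sum_apply, Pi.single_apply, Finset.sum_ite_eq, mul_ite]
  ring

lemma aux_second (n : ℕ) (hn : 1 ≤ n) (r : ℝ) (κ : Fin n → ℝ) (hκ : ∀ i, 0 < κ i)
    (i j : Fin n) :
    fderiv ℝ (fun x : Fin n → ℝ =>
        (1/r) * (((n:ℝ)⁻¹ * ∑ k, x k ^ r) ^ (1/r - 1) * ((n:ℝ)⁻¹ * (r * x j ^ (r-1))))) κ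
      (Pi.single i 1)
    = (1/r) * ( ((n:ℝ)⁻¹ * ∑ k, κ k ^ r) ^ (1/r - 1)
          * ((n:ℝ)⁻¹ * (r * ((r-1) * κ j ^ (r-2) * (if j = i then (1:ℝ) else 0))))
        + ((n:ℝ)⁻¹ * (r * κ j ^ (r-1)))
          * ((1/r - 1) * ((n:ℝ)⁻¹ * ∑ k, κ k ^ r) ^ (1/r - 1 - 1)
             * ((n:ℝ)⁻¹ * (r * κ i ^ (r-1)))) ) := by
  have hB0 : HasFDerivAt (fun x : Fin n → ℝ => x j ^ (r-1))
      (((r-1) * κ j ^ (r-1-1)) • (ContinuousLinearMap.proj j : (Fin n → ℝ) →L[ℝ] ℝ)) κ :=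
    (Real.hasDerivAt_rpow_const (Or.inl (hκ j).ne')).comp_hasFDerivAt (f := fun y : Fin n → ℝ => y j) κ
      (ContinuousLinearMap.proj j : (Fin n → ℝ) →L[ℝ] ℝ).hasFDerivAt
  have hB : HasFDerivAt (fun x : Fin n → ℝ => (n:ℝ)⁻¹ * (r * x j ^ (r-1)))
      ((n:ℝ)⁻¹ • (r • (((r-1) * κ j ^ (r-1-1)) • (ContinuousLinearMap.proj j : (Fin n → ℝ) →L[ℝ] ℝ)))) κ :=
    (hB0.const_mul r).const_mul _
  have hA := aux_main n hn r (1/r - 1) κ hκ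
  have hG := (hA.mul hB).const_mul (1/r)
  rw [HasFDerivAt.fderiv (f := fun x : Fin n → ℝ => (1/r) * (((n:ℝ)⁻¹ * ∑ k, x k ^ r) ^ (1/r - 1) * ((n:ℝ)⁻¹ * (r * x j ^ (r-1))))) hG]
  simp [ContinuousLinearMap.sum_apply, Pi.single_apply, Finset.sum_ite_eq, mul_ite]
  split_ifs with h
  · subst h
    rw [show r - 2 = r - 1 - 1 by ring]
    ring
  · ring

lemma aux_CS (n : ℕ) (hn : 1 ≤ n) (r : ℝ) (κ : Fin n → ℝ) (hκ : ∀ i, 0 < κ i)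
    (ξ : Fin n → ℝ) (hξκ : ¬ ∃ lam : ℝ, ξ = lam • κ) :
    (∑ i, κ i ^ (r-1) * ξ i) ^ 2 < (∑ i, κ i ^ r) * ∑ i, κ i ^ (r-2) * ξ i ^ 2 := by
  set a : Fin n → ℝ := fun i => κ i ^ (r/2) with ha
  set b : Fin n → ℝ := fun i => κ i ^ (r/2 - 1) * ξ i with hb
  have hne : (Finset.univ : Finset (Fin n)).Nonempty := by
    simpa [Finset.univ_nonempty_iff] using Fin.pos_iff_nonempty.mp hn
  have hS : (∑ i, κ i ^ r) = ∑ i, a i ^ 2 := by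
    refine Finset.sum_congr rfl fun i _ => ?_
    rw [ha, sq, ← Real.rpow_add (hκ i)]; norm_num
  have hT : (∑ i, κ i ^ (r-1) * ξ i) = ∑ i, a i * b i := by
    refine Finset.sum_congr rfl fun i _ => ?_
    simp only [ha, hb]
    rw [← mul_assoc, ← Real.rpow_add (hκ i)]; ring_nf
  have hW : (∑ i, κ i ^ (r-2) * ξ i ^ 2) = ∑ i, b i ^ 2 := by
    refine Finset.sum_congr rfl fun i _ => ?_
    simp only [hb, mul_pow, sq (κ i ^ (r/2-1)), ← Real.rpow_add (hκ i)]
    ring_nf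
  rw [hS, hT, hW]
  set S := ∑ i, a i ^ 2 with hS'
  set T := ∑ i, a i * b i with hT'
  set W := ∑ i, b i ^ 2 with hW'
  have hSpos : 0 < S :=
    Finset.sum_pos (fun i _ => by
      have := Real.rpow_pos_of_pos (hκ i) (r/2); positivity) hne
  have hq : ∑ i, (b i - (T/S) * a i) ^ 2 = W - T^2 / S := by
    have expand : ∀ i, (b i - (T/S) * a i) ^ 2
        = b i ^ 2 - 2*(T/S)*(a i * b i) + (T/S)^2 * a i ^2 := fun i => by ring
    simp only [expand]
    rw [Finset.sum_add_distrib, Finset.sum_sub_distrib, ← Finset.mul_sum, ← Finset.mul_sum,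
      ← hT', ← hW', ← hS']
    field_simp
    ring
  have hqnonneg : 0 ≤ ∑ i, (b i - (T/S) * a i) ^ 2 :=
    Finset.sum_nonneg fun i _ => sq_nonneg _
  have hqpos : 0 < ∑ i, (b i - (T/S) * a i) ^ 2 := by
    rcases hqnonneg.lt_or_eq with h | h
    · exact h
    exfalso
    apply hξκ
    refine ⟨T/S, funext fun i => ?_⟩
    have hz : ∀ i ∈ Finset.univ, (b i - (T/S) * a i) ^ 2 = 0 := by
      intro i _
      have := (Finset.sum_eq_zero_iff_of_nonneg (fun i _ => sq_nonneg (b i - (T/S) * a i))).mp h.symm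
      exact this i (Finset.mem_univ i)
    have hbi : b i = (T/S) * a i := by
      have := hz i (Finset.mem_univ i)
      have := pow_eq_zero_iff (n := 2) (by norm_num) |>.mp this
      linarith
    have h1 : κ i ^ (1 - r/2) * κ i ^ (r/2 - 1) = 1 := by
      rw [← Real.rpow_add (hκ i)]; norm_num
    have h2 : κ i ^ (1 - r/2) * κ i ^ (r/2) = κ i := by
      rw [← Real.rpow_add (hκ i)]; norm_num
    have : ξ i = (T/S) * κ i := by
      calc ξ i = (κ i ^ (1 - r/2) * κ i ^ (r/2 - 1)) * ξ i := by rw [h1]; ring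
      _ = κ i ^ (1 - r/2) * b i := by simp only [hb]; ring
      _ = κ i ^ (1 - r/2) * ((T/S) * a i) := by rw [hbi]
      _ = (T/S) * (κ i ^ (1 - r/2) * κ i ^ (r/2)) := by simp only [ha]; ring
      _ = (T/S) * κ i := by rw [h2]
    simpa using this
  have : 0 < W - T^2 / S := by linarith [hq ▸ hqpos]
  calc T^2 = (T^2/S) * S := by field_simp
  _ < W * S := by apply mul_lt_mul_of_pos_right _ hSpos; linarith
  _ = S * W := by ring

/-- The power mean `F(κ) = (n⁻¹ ∑ᵢ κᵢʳ)^{1/r}`, `-1 ≤ r < 1`, `r ≠ 0`, is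
strictly concave in non-radial directions on the positive cone `Γ₊`. -/
theorem powerMean_strictly_concave_nonradial (n : ℕ) (hn : 1 ≤ n) (r : ℝ)
    (hr1 : -1 ≤ r) (hr2 : r < 1) (hr0 : r ≠ 0)
    (F : (Fin n → ℝ) → ℝ)
    (hF : ∀ κ : Fin n → ℝ, F κ = ((n : ℝ)⁻¹ * ∑ i, κ i ^ r) ^ (1 / r))
    (κ : Fin n → ℝ) (hκ : ∀ i, 0 < κ i)
    (ξ : Fin n → ℝ) (hξ0 : ξ ≠ 0) (hξκ : ¬ ∃ lam : ℝ, ξ = lam • κ) :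
    ∑ i, ∑ j, fderiv ℝ (fun x => fderiv ℝ F x (Pi.single j 1)) κ
      (Pi.single i 1) * ξ i * ξ j < 0 := by
  have hFe : F = fun x => ((n:ℝ)⁻¹ * ∑ i, x i ^ r) ^ (1/r) := funext hF
  subst hFe
  have hU : IsOpen {x : Fin n → ℝ | ∀ i, 0 < x i} := by
    have : {x : Fin n → ℝ | ∀ i, 0 < x i} = Set.pi Set.univ (fun _ => Set.Ioi (0:ℝ)) := by
      ext x; simp [Set.mem_pi]
    rw [this]; exact isOpen_set_pi Set.finite_univ (fun _ _ => isOpen_Ioi)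
  have hmem : {x : Fin n → ℝ | ∀ i, 0 < x i} ∈ nhds κ := hU.mem_nhds hκ
  -- second-derivative values
  have hH : ∀ i j : Fin n,
      fderiv ℝ (fun x => fderiv ℝ (fun y : Fin n → ℝ => ((n:ℝ)⁻¹ * ∑ k, y k ^ r) ^ (1/r)) x
          (Pi.single j 1)) κ (Pi.single i 1)
      = (1/r) * ( ((n:ℝ)⁻¹ * ∑ k, κ k ^ r) ^ (1/r - 1)
            * ((n:ℝ)⁻¹ * (r * ((r-1) * κ j ^ (r-2) * (if j = i then (1:ℝ) else 0))))
          + ((n:ℝ)⁻¹ * (r * κ j ^ (r-1)))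
            * ((1/r - 1) * ((n:ℝ)⁻¹ * ∑ k, κ k ^ r) ^ (1/r - 1 - 1)
               * ((n:ℝ)⁻¹ * (r * κ i ^ (r-1))))) := by
    intro i j
    have hEE : (fun x => fderiv ℝ (fun y : Fin n → ℝ => ((n:ℝ)⁻¹ * ∑ k, y k ^ r) ^ (1/r)) x
          (Pi.single j 1))
        =ᶠ[nhds κ] (fun x : Fin n → ℝ =>
          (1/r) * (((n:ℝ)⁻¹ * ∑ k, x k ^ r) ^ (1/r - 1) * ((n:ℝ)⁻¹ * (r * x j ^ (r-1))))) := by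
      filter_upwards [hmem] with x hx
      exact aux_fderiv_val n hn r x hx j
    rw [hEE.fderiv_eq, aux_second n hn r κ hκ i j]
  simp only [hH]
  -- abbreviations
  set c : ℝ := (n:ℝ)⁻¹ with hc
  set S : ℝ := ∑ k, κ k ^ r with hS
  set T : ℝ := ∑ k, κ k ^ (r-1) * ξ k with hT
  set W : ℝ := ∑ k, κ k ^ (r-2) * ξ k ^ 2 with hW
  set A2 : ℝ := (c * S) ^ (1/r - 1 - 1) with hA2
  set A1 : ℝ := (c * S) ^ (1/r - 1) with hA1
  have hcpos : 0 < c := by rw [hc]; positivity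
  have hSpos : 0 < S := by
    rw [hS]
    apply Finset.sum_pos (fun i _ => Real.rpow_pos_of_pos (hκ i) r)
    simpa [Finset.univ_nonempty_iff] using Fin.pos_iff_nonempty.mp hn
  have hcS : 0 < c * S := by positivity
  have hA2pos : 0 < A2 := Real.rpow_pos_of_pos hcS _
  have hA1eq : A1 = A2 * (c * S) := by
    rw [hA1, hA2, show (1/r - 1) = (1/r - 1 - 1) + 1 by ring, Real.rpow_add hcS, Real.rpow_one,
      show (1/r - 1 - 1 + 1 - 1 : ℝ) = 1/r - 1 - 1 by ring]
  set b : ℝ := (1/r) * A1 * c * r * (r-1) with hbdef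
  set a : ℝ := (1/r) * (1/r - 1) * A2 * c^2 * r^2 with hadef
  -- compute the double sum
  have inner : ∀ i, (∑ j, ((1/r) * ( A1 * (c * (r * ((r-1) * κ j ^ (r-2) * (if j = i then (1:ℝ) else 0))))
          + (c * (r * κ j ^ (r-1))) * ((1/r - 1) * A2 * (c * (r * κ i ^ (r-1))))) * ξ i * ξ j))
      = b * (κ i ^ (r-2) * (ξ i * ξ i)) + (a * (κ i ^ (r-1) * ξ i)) * T := by
    intro i
    have hterm : ∀ j, ((1/r) * ( A1 * (c * (r * ((r-1) * κ j ^ (r-2) * (if j = i then (1:ℝ) else 0))))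
          + (c * (r * κ j ^ (r-1))) * ((1/r - 1) * A2 * (c * (r * κ i ^ (r-1))))) * ξ i * ξ j)
        = (if j = i then b * (κ j ^ (r-2) * (ξ i * ξ j)) else 0)
          + (a * (κ i ^ (r-1) * ξ i)) * (κ j ^ (r-1) * ξ j) := by
      intro j
      split_ifs with h
      · rw [hbdef, hadef]; ring
      · rw [hadef]; ring
    rw [Finset.sum_congr rfl (fun j _ => hterm j), Finset.sum_add_distrib,
      Finset.sum_ite_eq' Finset.univ i (fun j => b * (κ j ^ (r-2) * (ξ i * ξ j))),
      ← Finset.mul_sum, ← hT]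
    simp
  rw [Finset.sum_congr rfl (fun i _ => inner i), Finset.sum_add_distrib, ← Finset.mul_sum,
    ← Finset.sum_mul, ← Finset.mul_sum, ← hT]
  have hWW : (∑ i, κ i ^ (r-2) * (ξ i * ξ i)) = W := by
    rw [hW]; exact Finset.sum_congr rfl fun i _ => by ring
  rw [hWW]
  -- final algebraic form
  have hbval : b = (r-1) * c * (A2 * (c * S)) := by
    rw [hbdef, hA1eq]; field_simp
  have haval : a = (1-r) * c^2 * A2 := by
    rw [hadef]; field_simp
  have hQ : b * W + a * T * T = (1-r) * c^2 * A2 * (T^2 - S * W) := by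
    rw [hbval, haval]; ring
  rw [hQ]
  have hCS := aux_CS n hn r κ hκ ξ hξκ
  rw [← hS, ← hT, ← hW] at hCS
  have hpos : 0 < (1-r) * c^2 * A2 := by
    have : 0 < 1 - r := by linarith
    positivity
  have : T^2 - S * W < 0 := by linarith
  exact mul_neg_of_pos_of_neg hpos this
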